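/- The operator C_q on ℓ²(ℤ₊) satisfies C_q² = (1-q²) · Σ_{n=0}^∞ q^{2n} S^{n+1}(S*)^{n+1}, where the series converges in operator norm; consequently C_q lies in the C*-algebra generated by S. -/

import Mathlib

/-- ℓ²(ℤ₊) -/
noncomputable abbrev L2 : Type := lp (fun _ : ℕ => ℂ) 2

/-- standard basis vector e_n -/
noncomputable def e (n : ℕ) : L2 := lp.single 2 n 1


open ContinuousLinearMap Filter Finset
open scoped ENNReal NNReal

local notation "⟪" x ", " y "⟫" => @inner ℂ _ _ x y

namespace CqAux

lemma coord_eq_inner (f : L2) (k : ℕ) : ⟪e k, f⟫ = f k := by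
  simp [e, lp.inner_single_left]

lemma inner_e_e (k n : ℕ) : ⟪e k, e n⟫ = if k = n then 1 else 0 := by
  rw [coord_eq_inner]
  rcases eq_or_ne k n with h | h
  · subst h; simp [e, lp.single_apply_self]
  · simp [e, lp.single_apply_ne 2 n 1 h, h]

lemma vec_ext {f g : L2} (h : ∀ k, ⟪e k, f⟫ = ⟪e k, g⟫) : f = g := by
  apply lp.ext
  funext k
  have := h k
  rwa [coord_eq_inner, coord_eq_inner] at this

lemma dense_span : Dense (Submodule.span ℂ (Set.range e) : Set L2) := by
  intro f
  have h := lp.hasSum_single (E := fun _ : ℕ => ℂ) (p := 2) ENNReal.ofNat_ne_top f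
  refine mem_closure_of_tendsto h (Eventually.of_forall fun s => ?_)
  refine Submodule.sum_mem _ fun i _ => ?_
  have : lp.single 2 i (f i) = (f i) • e i := by
    rw [e, ← lp.single_smul]; norm_num
  rw [this]
  exact Submodule.smul_mem _ _ (Submodule.subset_span ⟨i, rfl⟩)

lemma ext_e {F : Type*} [NormedAddCommGroup F] [NormedSpace ℂ F] {A B : L2 →L[ℂ] F}
    (h : ∀ n, A (e n) = B (e n)) : A = B :=
  ContinuousLinearMap.ext_on dense_span (by rintro x ⟨n, rfl⟩; exact h n)

end CqAux

namespace CqAux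

lemma diag_apply {T : L2 →L[ℂ] L2} {d : ℕ → ℂ} (hT : ∀ n, T (e n) = d n • e n)
    (x : L2) (k : ℕ) : (T x) k = d k * x k := by
  have h : (innerSL ℂ (e k)).comp T = d k • innerSL ℂ (e k) := by
    refine ext_e fun n => ?_
    simp only [ContinuousLinearMap.comp_apply, ContinuousLinearMap.smul_apply, innerSL_apply_apply,
      hT n, inner_smul_right, inner_e_e]
    rcases eq_or_ne k n with h | h <;> simp [h]
  have h2 := congrArg (fun φ : L2 →L[ℂ] ℂ => φ x) h
  simp only [ContinuousLinearMap.comp_apply, ContinuousLinearMap.smul_apply, innerSL_apply_apply,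
    smul_eq_mul] at h2
  rw [coord_eq_inner, coord_eq_inner] at h2
  exact h2

lemma diag_norm {T : L2 →L[ℂ] L2} {d : ℕ → ℂ} (hT : ∀ n, T (e n) = d n • e n)
    {M : ℝ} (hM : 0 ≤ M) (hd : ∀ n, ‖d n‖ ≤ M) : ‖T‖ ≤ M := by
  refine ContinuousLinearMap.opNorm_le_bound _ hM fun x => ?_
  have htr : (0:ℝ) < (2 : ℝ≥0∞).toReal := by norm_num
  have hx := lp.hasSum_norm htr x
  have hTx := lp.hasSum_norm htr (T x)
  have hle : ‖T x‖ ^ (2 : ℝ≥0∞).toReal ≤ (M ^ (2 : ℝ≥0∞).toReal) * ‖x‖ ^ (2 : ℝ≥0∞).toReal := by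
    refine hasSum_le (fun k => ?_) hTx (hx.mul_left _)
    rw [diag_apply hT x k, norm_mul, Real.mul_rpow (norm_nonneg _) (norm_nonneg _)]
    gcongr
    exact hd k
  have h2 : (2 : ℝ≥0∞).toReal = 2 := by norm_num
  rw [h2] at hle
  have hsq : ‖T x‖ ^ (2:ℝ) ≤ (M * ‖x‖) ^ (2:ℝ) := by
    rwa [Real.mul_rpow hM (norm_nonneg _)]
  have hsq' : ‖T x‖ ^ (2:ℕ) ≤ (M * ‖x‖) ^ (2:ℕ) := by
    rw [← Real.rpow_natCast ‖T x‖ 2, ← Real.rpow_natCast (M * ‖x‖) 2]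
    exact_mod_cast hsq
  exact (pow_le_pow_iff_left₀ (norm_nonneg _) (mul_nonneg hM (norm_nonneg _)) two_ne_zero).mp hsq'

end CqAux

namespace CqAux

variable {S : L2 →L[ℂ] L2} (hS : ∀ n : ℕ, S (e n) = e (n + 1))
include hS

lemma Sadj_zero : ContinuousLinearMap.adjoint S (e 0) = 0 := by
  refine vec_ext fun k => ?_
  rw [ContinuousLinearMap.adjoint_inner_right, hS, inner_e_e, inner_zero_right]
  simp

lemma Sadj_succ (n : ℕ) : ContinuousLinearMap.adjoint S (e (n + 1)) = e n := by
  refine vec_ext fun k => ?_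
  rw [ContinuousLinearMap.adjoint_inner_right, hS, inner_e_e, inner_e_e]
  simp

lemma pow_S (m k : ℕ) : (S ^ m) (e k) = e (k + m) := by
  induction m with
  | zero => simp
  | succ m ih =>
    rw [pow_succ', ContinuousLinearMap.mul_apply, ih, hS]; ring_nf

lemma pow_Sadj (m k : ℕ) :
    ((ContinuousLinearMap.adjoint S) ^ m) (e k) = if m ≤ k then e (k - m) else 0 := by
  induction m generalizing k with
  | zero => simp
  | succ m ih =>
    rw [pow_succ, ContinuousLinearMap.mul_apply]
    cases k with
    | zero => rw [Sadj_zero hS]; simp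
    | succ j =>
      rw [Sadj_succ hS, ih]
      by_cases h : m ≤ j
      · rw [if_pos h, if_pos (by omega)]
        congr 1
        omega
      · rw [if_neg h, if_neg (by omega)]

lemma P_apply (n k : ℕ) :
    (S ^ (n+1) * (ContinuousLinearMap.adjoint S) ^ (n+1)) (e k)
      = if n + 1 ≤ k then e k else 0 := by
  rw [ContinuousLinearMap.mul_apply, pow_Sadj hS]
  by_cases h : n + 1 ≤ k
  · rw [if_pos h, if_pos h, pow_S hS]
    congr 1
    omega
  · rw [if_neg h, if_neg h, map_zero]

lemma norm_S_le : ‖S‖ ≤ 1 := by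
  have h1 : ContinuousLinearMap.adjoint S ∘L S = 1 := by
    refine ext_e fun n => ?_
    rw [ContinuousLinearMap.comp_apply, hS, Sadj_succ hS]
    simp
  have hiso := (ContinuousLinearMap.norm_map_iff_adjoint_comp_self S).mpr h1
  refine ContinuousLinearMap.opNorm_le_bound _ zero_le_one fun x => by rw [hiso, one_mul]

lemma norm_Sadj_le : ‖ContinuousLinearMap.adjoint S‖ ≤ 1 := by
  rw [LinearIsometryEquiv.norm_map ContinuousLinearMap.adjoint S]
  exact norm_S_le hS

lemma norm_P_le (n : ℕ) :
    ‖S ^ (n+1) * (ContinuousLinearMap.adjoint S) ^ (n+1)‖ ≤ 1 := by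
  calc ‖S ^ (n+1) * (ContinuousLinearMap.adjoint S) ^ (n+1)‖
      ≤ ‖S ^ (n+1)‖ * ‖(ContinuousLinearMap.adjoint S) ^ (n+1)‖ := norm_mul_le _ _
    _ ≤ ‖S‖ ^ (n+1) * ‖ContinuousLinearMap.adjoint S‖ ^ (n+1) := by
        gcongr <;> exact norm_pow_le' _ (Nat.succ_pos n)
    _ ≤ 1 * 1 := by
        gcongr <;> first
          | exact pow_le_one₀ (norm_nonneg _) (norm_S_le hS)
          | exact pow_le_one₀ (norm_nonneg _) (norm_Sadj_le hS)
    _ = 1 := one_mul 1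

end CqAux

open CqAux Filter Finset Topology in
set_option maxHeartbeats 1000000 in
/-- C_q² = (1−q²) Σ q^{2n} S^{n+1}(S*)^{n+1}, norm-convergent,
and C_q lies in the C*-algebra generated by S. -/
theorem cq_sq_series (q : ℝ) (hq : 0 < q) (hq1 : q < 1)
    (S Cq : L2 →L[ℂ] L2)
    (hS : ∀ n : ℕ, S (e n) = e (n + 1))
    (hC : ∀ n : ℕ, Cq (e n) = (Real.sqrt (1 - q ^ (2 * n)) : ℂ) • e n) :
    Summable (fun n : ℕ =>
        ((q : ℂ) ^ (2 * n)) • (S ^ (n + 1) * (ContinuousLinearMap.adjoint S) ^ (n + 1))) ∧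
    Cq ∘L Cq = ((1 : ℂ) - (q : ℂ) ^ 2) •
        ∑' n : ℕ, ((q : ℂ) ^ (2 * n)) • (S ^ (n + 1) * (ContinuousLinearMap.adjoint S) ^ (n + 1)) ∧
    Cq ∈ StarAlgebra.elemental ℂ S := by
  set T : ℕ → L2 →L[ℂ] L2 :=
    fun n => ((q : ℂ) ^ (2 * n)) • (S ^ (n + 1) * (ContinuousLinearMap.adjoint S) ^ (n + 1))
    with hTdef
  have hq2 : (0:ℝ) ≤ q ^ 2 := sq_nonneg q
  have hq21 : q ^ 2 < 1 := by nlinarith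
  -- summability
  have hbound : ∀ n, ‖T n‖ ≤ (q ^ 2) ^ n := by
    intro n
    show ‖((q : ℂ) ^ (2 * n)) • (S ^ (n + 1) * (ContinuousLinearMap.adjoint S) ^ (n + 1))‖ ≤ _
    calc ‖((q : ℂ) ^ (2 * n)) • (S ^ (n + 1) * (ContinuousLinearMap.adjoint S) ^ (n + 1))‖
        ≤ ‖(q:ℂ) ^ (2*n)‖ * ‖S ^ (n + 1) * (ContinuousLinearMap.adjoint S) ^ (n + 1)‖ :=
          ContinuousLinearMap.opNorm_smul_le _ _
      _ ≤ ‖(q:ℂ) ^ (2*n)‖ * 1 := by gcongr; exact norm_P_le hS n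
      _ = (q ^ 2) ^ n := by
          rw [mul_one, norm_pow, Complex.norm_real, Real.norm_eq_abs, abs_of_pos hq,
            ← pow_mul, mul_comm 2 n]
  have hsum : Summable T :=
    Summable.of_norm_bounded (summable_geometric_of_lt_one hq2 hq21) hbound
  refine ⟨hsum, ?_, ?_⟩
  · -- the identity
    have hne : (q:ℂ)^2 ≠ 1 := by
      intro h
      have h' : ((q^2 : ℝ) : ℂ) = ((1:ℝ) : ℂ) := by push_cast; simpa using h
      have := Complex.ofReal_inj.mp h'
      nlinarith
    refine ext_e fun k => ?_
    have hk1 : (0:ℝ) ≤ 1 - q ^ (2*k) :=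
      sub_nonneg.mpr (pow_le_one₀ hq.le hq1.le)
    have hLHS : (Cq ∘L Cq) (e k) = ((1:ℂ) - (q:ℂ) ^ (2*k)) • e k := by
      rw [ContinuousLinearMap.comp_apply, hC k, map_smul, hC k, smul_smul]
      congr 1
      rw [← Complex.ofReal_mul, Real.mul_self_sqrt hk1]
      push_cast
      ring
    have happ : (∑' n, T n) (e k) = ∑' n, (T n) (e k) := by
      have h := (hsum.hasSum.mapL (ContinuousLinearMap.apply ℂ L2 (e k))).tsum_eq
      simpa only [ContinuousLinearMap.apply_apply] using h.symm
    have hterm : ∀ n, (T n) (e k) = if n + 1 ≤ k then ((q:ℂ)^2)^n • e k else 0 := by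
      intro n
      show ((q : ℂ) ^ (2 * n)) • ((S ^ (n+1) * (ContinuousLinearMap.adjoint S) ^ (n+1)) (e k)) = _
      rw [P_apply hS]
      by_cases h : n + 1 ≤ k
      · rw [if_pos h, if_pos h, ← pow_mul]
      · rw [if_neg h, if_neg h, smul_zero]
    have hfin : ∑' n, (T n) (e k) = (∑ n ∈ range k, ((q:ℂ)^2)^n) • e k := by
      rw [tsum_congr hterm, tsum_eq_sum (s := range k) (fun b hb => by
        rw [if_neg (by simp only [mem_range] at hb; omega)])]
      rw [Finset.sum_smul]
      refine Finset.sum_congr rfl fun n hn => ?_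
      rw [if_pos (by simp only [mem_range] at hn; omega)]
    rw [hLHS, ContinuousLinearMap.smul_apply, happ, hfin, geom_sum_eq hne, smul_smul]
    congr 1
    have hne0 : (q:ℂ)^2 - 1 ≠ 0 := sub_ne_zero.mpr hne
    rw [pow_mul]
    field_simp
    ring
  · -- membership in the C*-algebra generated by S
    set c : ℕ → ℝ := fun j => Real.sqrt (1 - q ^ (2 * j)) with hcdef
    set A : ℕ → L2 →L[ℂ] L2 := fun N => ∑ n ∈ range N,
      (((c (n+1) : ℝ) : ℂ) - ((c n : ℝ) : ℂ)) •
        (S ^ (n+1) * (ContinuousLinearMap.adjoint S) ^ (n+1)) with hAdef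
    have hSmem : S ∈ StarAlgebra.elemental ℂ S := StarAlgebra.elemental.self_mem ℂ S
    have hSadjmem : ContinuousLinearMap.adjoint S ∈ StarAlgebra.elemental ℂ S := by
      rw [← ContinuousLinearMap.star_eq_adjoint]
      exact StarAlgebra.elemental.star_self_mem ℂ S
    have memA : ∀ N, A N ∈ StarAlgebra.elemental ℂ S := by
      intro N
      refine Subalgebra.sum_mem _ fun n _ => ?_
      exact SMulMemClass.smul_mem _ (mul_mem (pow_mem hSmem _) (pow_mem hSadjmem _))
    have hc0 : c 0 = 0 := by simp [hcdef]
    have hc_le_one : ∀ j, c j ≤ 1 := fun j =>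
      Real.sqrt_le_one.mpr (by nlinarith [pow_nonneg hq.le (2*j)])
    have hc_nonneg : ∀ j, 0 ≤ c j := fun j => Real.sqrt_nonneg _
    have hc_mono : ∀ {i j}, i ≤ j → c i ≤ c j := by
      intro i j hij
      refine Real.sqrt_le_sqrt ?_
      have : q ^ (2*j) ≤ q ^ (2*i) := pow_le_pow_of_le_one hq.le hq1.le (by omega)
      linarith
    have hA : ∀ N k, A N (e k) = ((c (min N k) : ℝ) : ℂ) • e k := by
      intro N k
      rw [hAdef]
      simp only [ContinuousLinearMap.sum_apply, ContinuousLinearMap.smul_apply]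
      have h1 : ∀ n, (S ^ (n+1) * (ContinuousLinearMap.adjoint S) ^ (n+1)) (e k)
          = if n + 1 ≤ k then e k else 0 := fun n => P_apply hS n k
      calc (∑ n ∈ range N, (((c (n+1) : ℝ) : ℂ) - ((c n : ℝ) : ℂ)) •
              (S ^ (n+1) * (ContinuousLinearMap.adjoint S) ^ (n+1)) (e k))
          = ∑ n ∈ range (min N k), (((c (n+1) : ℝ) : ℂ) - ((c n : ℝ) : ℂ)) • e k := by
            rw [← Finset.sum_subset (Finset.range_subset_range.mpr (min_le_left N k))]
            · refine Finset.sum_congr rfl fun n hn => ?_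
              rw [h1, if_pos (by simp only [mem_range] at hn; omega)]
            · intro n hn hn'
              simp only [mem_range] at hn hn'
              rw [h1, if_neg (by omega), smul_zero]
        _ = ((c (min N k) : ℝ) : ℂ) • e k := by
            rw [← Finset.sum_smul, Finset.sum_range_sub (fun j => ((c j : ℝ) : ℂ))]
            rw [hc0]
            norm_num
    have hbound2 : ∀ N, ‖Cq - A N‖ ≤ 1 - c N := by
      intro N
      have hdiag : ∀ k, (Cq - A N) (e k)
          = (((c k - c (min N k) : ℝ)) : ℂ) • e k := by
        intro k
        rw [ContinuousLinearMap.sub_apply, hC k, hA N k, ← sub_smul]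
        congr 1
        push_cast
        rfl
      refine diag_norm hdiag (by linarith [hc_le_one N]) fun k => ?_
      rw [Complex.norm_real, Real.norm_eq_abs]
      rcases le_total N k with h | h
      · rw [min_eq_left h, abs_of_nonneg (by linarith [hc_mono h])]
        linarith [hc_le_one k, hc_mono h]
      · rw [min_eq_right h]
        simp only [sub_self, abs_zero]
        linarith [hc_le_one N]
    have hcN : Tendsto (fun N => 1 - c N) atTop (𝓝 0) := by
      have h0 : Tendsto (fun N : ℕ => q ^ (2*N)) atTop (𝓝 0) := by
        have := tendsto_pow_atTop_nhds_zero_of_lt_one hq2 hq21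
        refine this.congr fun N => ?_
        rw [← pow_mul]
      have h1 : Tendsto (fun N : ℕ => 1 - q ^ (2*N)) atTop (𝓝 1) := by
        simpa using tendsto_const_nhds.sub h0
      have h2 : Tendsto (fun N : ℕ => c N) atTop (𝓝 1) := by
        have := h1.sqrt
        simpa [hcdef] using this
      have h3 := (tendsto_const_nhds (x := (1:ℝ)) (f := atTop (α := ℕ))).sub h2
      simpa using h3
    have hten : Tendsto A atTop (𝓝 Cq) := by
      rw [tendsto_iff_norm_sub_tendsto_zero]
      refine squeeze_zero (fun N => norm_nonneg _) (fun N => ?_) hcN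
      rw [norm_sub_rev]
      exact hbound2 N
    exact (StarAlgebra.elemental.isClosed ℂ S).mem_of_tendsto hten
      (Eventually.of_forall memA)
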